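/- Let G=(V,E) be a directed graph and v₀, v_g ∈ V with v₀ ≠ v_g and (v₀,v_g) ∉ E. Then there is no positional strategy σ_r for the runner in S^tb(G) such that every play of S^tb(G) from ((E,v₀),r) consistent with σ_r contains a state whose runner position is v_g (i.e., ⟨⟨{r}⟩⟩ F g fails at ((E,v₀),r)). -/

import Mathlib

/-- A sabotage game-state: the set of remaining edges together with the runner's position. -/
abbrev GState (V : Type*) := Finset (V × V) × V

/-- The two agents: runner and demon. -/
inductive Agent : Type
  | r : Agent
  | d : Agent
deriving DecidableEq

/-- A state of the turn-based sabotage game structure: a game-state plus the agent owning it. -/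
abbrev TbState (V : Type*) := GState V × Agent

section Defs

variable {V : Type*} [DecidableEq V]

/-- Runner's available actions in the turn-based structure (`none` is skip). -/
def tbActR (s : TbState V) : Set (Option (V × V)) :=
  match s.2 with
  | Agent.r => {a | ∃ e ∈ s.1.1, e.1 = s.1.2 ∧ a = some e}
  | Agent.d => {none}

/-- Demon's available actions in the turn-based structure (`none` is skip). -/
def tbActD (s : TbState V) : Set (Option (V × V)) :=
  match s.2 with
  | Agent.r => {none}
  | Agent.d => {a | ∃ e ∈ s.1.1, a = some e}

/-- Transition function of the turn-based sabotage game structure. -/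
def tbDelta (s : TbState V) (ar ad : Option (V × V)) : TbState V :=
  match ar, ad with
  | some e, _ => ((s.1.1, e.2), Agent.d)
  | none, some e => ((s.1.1.erase e, s.1.2), Agent.r)
  | none, none => s

/-- `t` arises from `s` in the turn-based structure by the available action pair `(ar, ad)`. -/
def tbStepBy (s : TbState V) (ar ad : Option (V × V)) (t : TbState V) : Prop :=
  ar ∈ tbActR s ∧ ad ∈ tbActD s ∧ t = tbDelta s ar ad

/-- One-step transition relation of the turn-based structure. -/
def tbStep (s t : TbState V) : Prop := ∃ ar ad, tbStepBy s ar ad t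

/-- Runner's available actions in the concurrent structure. -/
def conActR (s : GState V) : Set (V × V) := {e | e ∈ s.1 ∧ e.1 = s.2}

/-- Demon's available actions in the concurrent structure. -/
def conActD (s : GState V) : Set (V × V) := {e | e ∈ s.1}

/-- Transition function of the concurrent sabotage game structure. -/
def conDelta (s : GState V) (er ed : V × V) : GState V :=
  if er = ed then s else (s.1.erase ed, er.2)

/-- `t` arises from `s` in the concurrent structure by the available action pair `(er, ed)`. -/
def conStepBy (s : GState V) (er ed : V × V) (t : GState V) : Prop :=
  er ∈ s.1 ∧ er.1 = s.2 ∧ ed ∈ s.1 ∧ t = conDelta s er ed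

/-- One-step transition relation of the concurrent structure. -/
def conStep (s t : GState V) : Prop := ∃ er ed, conStepBy s er ed t

/-- Runner's available actions in the general structure (`none` is skip, always available). -/
def genActR (s : GState V) : Set (Option (V × V)) :=
  {a | a = none ∨ ∃ e ∈ s.1, e.1 = s.2 ∧ a = some e}

/-- Demon's available actions in the general structure (`none` is skip, always available). -/
def genActD (s : GState V) : Set (Option (V × V)) :=
  {a | a = none ∨ ∃ e ∈ s.1, a = some e}

/-- Transition function of the general sabotage game structure. -/
def genDelta (s : GState V) (ar ad : Option (V × V)) : GState V :=
  match ar, ad with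
  | none, none => s
  | none, some ed => (s.1.erase ed, s.2)
  | some er, none => (s.1, er.2)
  | some er, some ed => if er = ed then s else (s.1.erase ed, er.2)

/-- `t` arises from `s` in the general structure by the available action pair `(ar, ad)`. -/
def genStepBy (s : GState V) (ar ad : Option (V × V)) (t : GState V) : Prop :=
  ar ∈ genActR s ∧ ad ∈ genActD s ∧ t = genDelta s ar ad

/-- One-step transition relation of the general structure. -/
def genStep (s t : GState V) : Prop := ∃ ar ad, genStepBy s ar ad t

/-- A (finite or infinite) play: a maximal sequence of states starting at `s₀`, where each state
arises from its predecessor by the step relation. `p n = none` means the play has already ended. -/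
def IsPlay {S : Type*} (step : S → S → Prop) (s₀ : S) (p : ℕ → Option S) : Prop :=
  p 0 = some s₀ ∧
  (∀ n t, p (n + 1) = some t → ∃ s, p n = some s ∧ step s t) ∧
  (∀ n s, p n = some s → (∃ t, step s t) → (p (n + 1)).isSome)

/-- The structural label of a game-state `(E', v)`: the proposition `p_v` (coded `Sum.inl v`)
together with the propositions `q_e` for `e ∈ E'` (coded `Sum.inr e`). -/
def label (s : GState V) : Set (V ⊕ (V × V)) :=
  {x | x = Sum.inl s.2 ∨ ∃ e ∈ s.1, x = Sum.inr e}

/-- `σ` is a positional runner strategy in the turn-based structure. -/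
def TbStratR (σ : TbState V → Option (V × V)) : Prop :=
  ∀ s, (tbActR s).Nonempty → σ s ∈ tbActR s

/-- `σ` is a positional demon strategy in the turn-based structure. -/
def TbStratD (σ : TbState V → Option (V × V)) : Prop :=
  ∀ s, (tbActD s).Nonempty → σ s ∈ tbActD s

/-- The play `p` is consistent with the runner strategy `σ` in the turn-based structure. -/
def TbConsR (σ : TbState V → Option (V × V)) (p : ℕ → Option (TbState V)) : Prop :=
  ∀ n s t, p n = some s → p (n + 1) = some t → ∃ ad, tbStepBy s (σ s) ad t

/-- The play `p` is consistent with the demon strategy `σ` in the turn-based structure. -/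
def TbConsD (σ : TbState V → Option (V × V)) (p : ℕ → Option (TbState V)) : Prop :=
  ∀ n s t, p n = some s → p (n + 1) = some t → ∃ ar, tbStepBy s ar (σ s) t

/-- The play `p` is consistent with both strategies in the turn-based structure. -/
def TbConsRD (σr σd : TbState V → Option (V × V)) (p : ℕ → Option (TbState V)) : Prop :=
  ∀ n s t, p n = some s → p (n + 1) = some t → tbStepBy s (σr s) (σd s) t

/-- `σ` is a positional runner strategy in the concurrent structure. -/
def ConStratR (σ : GState V → V × V) : Prop :=
  ∀ s, (conActR s).Nonempty → σ s ∈ conActR s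

/-- `σ` is a positional demon strategy in the concurrent structure. -/
def ConStratD (σ : GState V → V × V) : Prop :=
  ∀ s, (conActD s).Nonempty → σ s ∈ conActD s

/-- The play `p` is consistent with both strategies in the concurrent structure. -/
def ConConsRD (σr σd : GState V → V × V) (p : ℕ → Option (GState V)) : Prop :=
  ∀ n s t, p n = some s → p (n + 1) = some t → conStepBy s (σr s) (σd s) t

/-- Runner has a winning strategy in the turn-based reachability sabotage game with goal `vg`,
from the game-state `(E', v)`. -/
def Reach (vg : V) (E' : Finset (V × V)) (v : V) : Prop :=
  v = vg ∨ ∃ e ∈ E', e.1 = v ∧ ∀ f ∈ E', Reach vg (E'.erase f) e.2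
termination_by E'.card
decreasing_by exact Finset.card_erase_lt_of_mem (by assumption)

/-- Runner has a winning strategy in the turn-based liveness sabotage game with liveness
parameter `b ≥ 1`, from the game-state `(E', v)`. -/
def Live : ℕ → Finset (V × V) → V → Prop
  | 0, _, _ => True
  | 1, E', v => ∃ e ∈ E', e.1 = v
  | n + 2, E', v => ∃ e ∈ E', e.1 = v ∧ ∀ f ∈ E', Live (n + 1) (E'.erase f) e.2

end Defs

/-- Formulas of sabotage modal logic over a set `P` of propositions. -/
inductive SML (P : Type*) : Type _
  | top : SML P
  | atom : P → SML P
  | neg : SML P → SML P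
  | and : SML P → SML P → SML P
  | dia : SML P → SML P
  | sab : SML P → SML P

namespace SML
/-- Disjunction. -/
def or {P : Type*} (φ ψ : SML P) : SML P := .neg (.and (.neg φ) (.neg ψ))
/-- Box. -/
def box {P : Type*} (φ : SML P) : SML P := .neg (.dia (.neg φ))
/-- Sabotage box `■`. -/
def sabBox {P : Type*} (φ : SML P) : SML P := .neg (.sab (.neg φ))
end SML

/-- Truth of an SML formula at world `w` of the sabotage model `(W, R, Val)`. -/
def Sat {W P : Type*} [DecidableEq W] (Val : P → Set W) :
    SML P → Finset (W × W) → W → Prop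
  | .top, _, _ => True
  | .atom q, _, w => w ∈ Val q
  | .neg φ, R, w => ¬ Sat Val φ R w
  | .and φ ψ, R, w => Sat Val φ R w ∧ Sat Val ψ R w
  | .dia φ, R, w => ∃ u, (w, u) ∈ R ∧ Sat Val φ R u
  | .sab φ, R, w => ∃ x ∈ R, Sat Val φ (R.erase x) w

/-- The formulas `ρ₀ := g`, `ρ_{n+1} := g ∨ ◇■ρ_n`, over the single proposition `g`. -/
def rho : ℕ → SML Unit
  | 0 => .atom ()
  | n + 1 => SML.or (.atom ()) (.dia (SML.sabBox (rho n)))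

/-- The formulas `γ₁ := ◇⊤`, `γ_{n+1} := ◇■γ_n` (the value at `0` is a dummy). -/
def gamma : ℕ → SML Unit
  | 0 => .top
  | 1 => .dia .top
  | n + 2 => .dia (SML.sabBox (gamma (n + 1)))

section Demon

variable {V : Type*} [DecidableEq V]

open Classical in
/-- Deterministic successor: the runner follows `σr`, the demon erases `(v, vg)` if present. -/
noncomputable def nextSt (σr : TbState V → Option (V × V)) (vg : V) :
    TbState V → Option (TbState V)
  | ((E', v), Agent.r) =>
      if _h : ∃ e ∈ E', e.1 = v then
        match σr ((E', v), Agent.r) with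
        | some e => some ((E', e.2), Agent.d)
        | none => none
      else none
  | ((E', v), Agent.d) =>
      if h : E'.Nonempty then
        some ((E'.erase (if (v, vg) ∈ E' then (v, vg) else h.choose), v), Agent.r)
      else none

lemma tbActR_r (E' : Finset (V × V)) (v : V) :
    tbActR ((E', v), Agent.r) = {a | ∃ e ∈ E', e.1 = v ∧ a = some e} := rfl

lemma tbActR_d (E' : Finset (V × V)) (v : V) :
    tbActR ((E', v), Agent.d) = {none} := rfl

lemma tbActD_r (E' : Finset (V × V)) (v : V) :
    tbActD ((E', v), Agent.r) = {none} := rfl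

lemma tbActD_d (E' : Finset (V × V)) (v : V) :
    tbActD ((E', v), Agent.d) = {a | ∃ e ∈ E', a = some e} := rfl

lemma strat_r_spec {σr : TbState V → Option (V × V)} (hσ : TbStratR σr)
    {E' : Finset (V × V)} {v : V} (h : ∃ e ∈ E', e.1 = v) :
    ∃ e ∈ E', e.1 = v ∧ σr ((E', v), Agent.r) = some e := by
  obtain ⟨e, he, hev⟩ := h
  have := hσ ((E', v), Agent.r) ⟨some e, ⟨e, he, hev, rfl⟩⟩
  exact this

lemma strat_d_spec {σr : TbState V → Option (V × V)} (hσ : TbStratR σr)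
    (E' : Finset (V × V)) (v : V) : σr ((E', v), Agent.d) = none := by
  have := hσ ((E', v), Agent.d) ⟨none, rfl⟩
  exact this

lemma nextSt_r {σr : TbState V → Option (V × V)} (hσ : TbStratR σr) {vg : V}
    {E' : Finset (V × V)} {v : V} {t : TbState V}
    (h : nextSt σr vg ((E', v), Agent.r) = some t) :
    ∃ e ∈ E', e.1 = v ∧ σr ((E', v), Agent.r) = some e ∧ t = ((E', e.2), Agent.d) := by
  simp only [nextSt] at h
  split at h
  · rename_i hE
    obtain ⟨e, he, hev, hσe⟩ := strat_r_spec hσ hE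
    rw [hσe] at h
    exact ⟨e, he, hev, hσe, (Option.some_inj.mp h).symm⟩
  · exact absurd h (by simp)

lemma nextSt_d {σr : TbState V → Option (V × V)} {vg : V}
    {E' : Finset (V × V)} {v : V} {t : TbState V}
    (h : nextSt σr vg ((E', v), Agent.d) = some t) :
    ∃ ed ∈ E', t = ((E'.erase ed, v), Agent.r) ∧ ((v, vg) ∈ E' → ed = (v, vg)) := by
  simp only [nextSt] at h
  split at h
  · rename_i hE
    refine ⟨_, ?_, (Option.some_inj.mp h).symm, ?_⟩
    · split
      · assumption
      · exact hE.choose_spec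
    · intro hv; rw [if_pos hv]
  · exact absurd h (by simp)

lemma nextSt_r_isSome {σr : TbState V → Option (V × V)} (hσ : TbStratR σr) {vg : V}
    {E' : Finset (V × V)} {v : V} (h : ∃ e ∈ E', e.1 = v) :
    (nextSt σr vg ((E', v), Agent.r)).isSome := by
  obtain ⟨e, he, hev, hσe⟩ := strat_r_spec hσ h
  simp only [nextSt]
  rw [dif_pos h, hσe]
  rfl

lemma nextSt_d_isSome {σr : TbState V → Option (V × V)} {vg : V}
    {E' : Finset (V × V)} {v : V} (h : E'.Nonempty) :
    (nextSt σr vg ((E', v), Agent.d)).isSome := by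
  simp only [nextSt]
  rw [dif_pos h]
  rfl

/-- The deterministic play generated by `nextSt`. -/
noncomputable def playOf (σr : TbState V → Option (V × V)) (vg : V) (s₀ : TbState V) :
    ℕ → Option (TbState V)
  | 0 => some s₀
  | n + 1 => (playOf σr vg s₀ n).bind (nextSt σr vg)

end Demon

/-- If `v₀ ≠ v_g` and `(v₀, v_g) ∉ E`, then no positional runner strategy in
`S^tb(G)` guarantees that every consistent play from `((E,v₀),r)` visits a state whose runner
position is `v_g` (i.e. `⟨⟨{r}⟩⟩ F g` fails at `((E,v₀),r)`). -/
theorem runner_cannot_enforce_Fg {V : Type*} [DecidableEq V] [Fintype V]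
    (E : Finset (V × V)) (hE : E.Nonempty) (v₀ vg : V)
    (hne : v₀ ≠ vg) (hedge : (v₀, vg) ∉ E) :
    ¬ ∃ σr : TbState V → Option (V × V), TbStratR σr ∧
        ∀ p : ℕ → Option (TbState V), IsPlay tbStep ((E, v₀), Agent.r) p → TbConsR σr p →
          ∃ n s, p n = some s ∧ s.1.2 = vg := by
  rintro ⟨σr, hσ, hwin⟩
  set s₀ : TbState V := ((E, v₀), Agent.r) with hs₀
  set p := playOf σr vg s₀ with hp
  -- p is a play
  have hplay : IsPlay tbStep s₀ p := by
    refine ⟨rfl, ?_, ?_⟩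
    · intro n t ht
      rw [hp, playOf] at ht
      obtain ⟨s, hs, hnext⟩ := Option.bind_eq_some_iff.mp ht
      refine ⟨s, hs, ?_⟩
      obtain ⟨⟨E', v⟩, a⟩ := s
      cases a with
      | r =>
        obtain ⟨e, he, hev, hσe, rfl⟩ := nextSt_r hσ hnext
        exact ⟨some e, none, ⟨e, he, hev, rfl⟩, rfl, rfl⟩
      | d =>
        obtain ⟨ed, hed, rfl, -⟩ := nextSt_d hnext
        exact ⟨none, some ed, rfl, ⟨ed, hed, rfl⟩, rfl⟩
    · intro n s hs hstep
      obtain ⟨t, ar, ad, har, had, -⟩ := hstep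
      rw [hp] at hs ⊢
      rw [playOf, hs, Option.bind_some]
      obtain ⟨⟨E', v⟩, a⟩ := s
      cases a with
      | r =>
        obtain ⟨e, he, hev, -⟩ := har
        exact nextSt_r_isSome hσ ⟨e, he, hev⟩
      | d =>
        obtain ⟨e, he, -⟩ := had
        exact nextSt_d_isSome ⟨e, he⟩
  -- p is consistent with σr
  have hcons : TbConsR σr p := by
    intro n s t hs ht
    rw [hp] at hs ht
    rw [playOf, hs, Option.bind_some] at ht
    obtain ⟨⟨E', v⟩, a⟩ := s
    cases a with
    | r =>
      obtain ⟨e, he, hev, hσe, rfl⟩ := nextSt_r hσ ht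
      exact ⟨none, by rw [hσe]; exact ⟨⟨e, he, hev, rfl⟩, rfl, rfl⟩⟩
    | d =>
      obtain ⟨ed, hed, rfl, -⟩ := nextSt_d ht
      exact ⟨some ed, by rw [strat_d_spec hσ]; exact ⟨rfl, ⟨ed, hed, rfl⟩, rfl⟩⟩
  -- invariant: the runner never sits at vg, and at runner states there is no edge to vg
  have hinv : ∀ n s, p n = some s →
      s.1.2 ≠ vg ∧ (s.2 = Agent.r → (s.1.2, vg) ∉ s.1.1) := by
    intro n
    induction n with
    | zero =>
      intro s hs
      rw [hp, playOf, Option.some_inj] at hs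
      subst hs
      exact ⟨hne, fun _ => hedge⟩
    | succ n ih =>
      intro t ht
      rw [hp, playOf] at ht
      obtain ⟨s, hs, hnext⟩ := Option.bind_eq_some_iff.mp ht
      obtain ⟨hvg, hnoedge⟩ := ih s hs
      obtain ⟨⟨E', v⟩, a⟩ := s
      cases a with
      | r =>
        obtain ⟨e, he, hev, -, rfl⟩ := nextSt_r hσ hnext
        refine ⟨fun h2 => ?_, fun h => by simp at h⟩
        apply hnoedge rfl
        have : e = (v, vg) := by
          obtain ⟨e1, e2⟩ := e
          simp only at hev h2
          rw [hev, h2]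
        rwa [this] at he
      | d =>
        obtain ⟨ed, hed, rfl, hch⟩ := nextSt_d hnext
        refine ⟨hvg, fun _ hmem => ?_⟩
        simp only at hmem
        by_cases hv : (v, vg) ∈ E'
        · rw [hch hv] at hmem
          exact Finset.notMem_erase _ _ hmem
        · exact hv (Finset.mem_of_mem_erase hmem)
  obtain ⟨n, s, hs, hvg⟩ := hwin p hplay hcons
  exact (hinv n s hs).1 hvg
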